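/- Let 0 < m ≤ M and n ≥ 2. For every deterministic online search strategy A there exists a price sequence σ of length n with all prices in [m, M] such that max_k σ k ≥ √(M/m) · profit(A, σ); that is, no deterministic online algorithm without advice achieves a competitive ratio better than √(M/m) for online search. -/

import Mathlib

/-- The maximum price of a price sequence of positive length. -/
noncomputable def maxPrice {n : ℕ} (hn : 0 < n) (σ : Fin n → ℝ) : ℝ :=
  Finset.univ.sup' ⟨⟨0, hn⟩, Finset.mem_univ _⟩ σ

/-- The profit of a deterministic online search strategy `A : List ℝ → Bool`
on the price sequence `σ`: it accepts at the least index `k` such that `A`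
applied to the prefix `[σ 0, …, σ k]` is `true`, obtaining `σ k`; if no such
index exists it must accept the last price `σ (n-1)`. -/
noncomputable def osProfit {n : ℕ} (hn : 0 < n) (A : List ℝ → Bool) (σ : Fin n → ℝ) : ℝ :=
  if h : ∃ k : Fin n, A ((List.ofFn σ).take ((k : ℕ) + 1)) = true then
    σ ((Finset.univ.filter (fun k : Fin n => A ((List.ofFn σ).take ((k : ℕ) + 1)) = true)).min'
      (h.imp fun k hk => Finset.mem_filter.mpr ⟨Finset.mem_univ _, hk⟩))
  else σ ⟨n - 1, Nat.sub_lt hn one_pos⟩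

/-- No deterministic online algorithm without advice achieves
a competitive ratio better than `√(M/m)` for online search: for every
deterministic strategy `A` there is a price sequence of length `n ≥ 2` with
prices in `[m, M]` on which the optimal profit is at least `√(M/m)` times the
profit of `A`. -/
theorem deterministic_lower_bound_sqrt
    (m M : ℝ) (hm : 0 < m) (hmM : m ≤ M)
    (n : ℕ) (hn2 : 2 ≤ n) (hn : 0 < n) (A : List ℝ → Bool) :
    ∃ σ : Fin n → ℝ, (∀ i, m ≤ σ i ∧ σ i ≤ M) ∧
      Real.sqrt (M / m) * osProfit hn A σ ≤ maxPrice hn σ := by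
  obtain ⟨n', rfl⟩ : ∃ n', n = n' + 2 := ⟨n - 2, by omega⟩
  have hM : 0 < M := lt_of_lt_of_le hm hmM
  set p := Real.sqrt (m * M) with hp
  have hs : p ^ 2 = m * M := Real.sq_sqrt (by positivity)
  have hs0 : 0 ≤ p := Real.sqrt_nonneg _
  have hmp : m ≤ p := by nlinarith
  have hpM : p ≤ M := by nlinarith
  have hmul : Real.sqrt (M / m) * p = M := by
    rw [hp, ← Real.sqrt_mul (by positivity)]
    rw [show M / m * (m * M) = M * M by field_simp]
    exact Real.sqrt_mul_self hM.le
  have hmul2 : Real.sqrt (M / m) * m = p := by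
    rw [hp, show m * M = M / m * (m * m) by field_simp,
      Real.sqrt_mul (by positivity), Real.sqrt_mul_self hm.le]
  by_cases hA : A [p] = true
  · -- strategy accepts p: follow with M
    refine ⟨fun i => if i = 0 then p else M, fun i => ?_, ?_⟩
    · by_cases h : i = 0 <;> simp [h, hmp, hpM, hmM, le_refl, hm.le] <;> constructor <;>
        first | exact hmp | exact hpM | exact hmM | exact le_refl M
    · set σ : Fin (n' + 2) → ℝ := fun i => if i = 0 then p else M with hσ
      have htake : (List.ofFn σ).take 1 = [σ 0] := by
        rw [List.ofFn_succ]; simp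
      have h0 : A ((List.ofFn σ).take (((0 : Fin (n' + 2)) : ℕ) + 1)) = true := by
        simpa [htake, hσ] using hA
      have hex : ∃ k : Fin (n' + 2), A ((List.ofFn σ).take ((k : ℕ) + 1)) = true := ⟨0, h0⟩
      have hprofit : osProfit hn A σ = p := by
        rw [osProfit, dif_pos hex]
        have hmem : (0 : Fin (n' + 2)) ∈
            Finset.univ.filter (fun k : Fin (n' + 2) =>
              A ((List.ofFn σ).take ((k : ℕ) + 1)) = true) :=
          Finset.mem_filter.mpr ⟨Finset.mem_univ _, h0⟩
        have hle := Finset.min'_le _ _ hmem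
        have heq : (Finset.univ.filter (fun k : Fin (n' + 2) =>
            A ((List.ofFn σ).take ((k : ℕ) + 1)) = true)).min' ⟨0, hmem⟩ = 0 :=
          le_antisymm hle (Fin.zero_le _)
        rw [heq]
        simp [hσ]
      have hmax : M ≤ maxPrice hn σ := by
        have := Finset.le_sup' σ (Finset.mem_univ (1 : Fin (n' + 2)))
        simpa [maxPrice, hσ, show (1 : Fin (n' + 2)) ≠ 0 from Fin.ne_of_val_ne (by simp)]
          using this
      rw [hprofit, hmul]; exact hmax
  · -- strategy rejects p: follow with m
    refine ⟨fun i => if i = 0 then p else m, fun i => ?_, ?_⟩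
    · by_cases h : i = 0
      · simp only [h, if_pos]; exact ⟨hmp, hpM⟩
      · simp only [if_neg h]; exact ⟨le_refl m, hmM⟩
    · set σ : Fin (n' + 2) → ℝ := fun i => if i = 0 then p else m with hσ
      have htake : (List.ofFn σ).take 1 = [σ 0] := by
        rw [List.ofFn_succ]; simp
      have hprofit : osProfit hn A σ = m := by
        rw [osProfit]
        split_ifs with hex
        · set S := Finset.univ.filter (fun k : Fin (n' + 2) =>
            A ((List.ofFn σ).take ((k : ℕ) + 1)) = true) with hS
          have hSne : S.Nonempty :=
            hex.imp fun k hk => Finset.mem_filter.mpr ⟨Finset.mem_univ _, hk⟩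
          have hmem : S.min' hSne ∈ S := Finset.min'_mem _ _
          have hacc := (Finset.mem_filter.mp hmem).2
          have hne : S.min' hSne ≠ 0 := by
            intro h0
            rw [h0] at hacc
            simp only [Fin.val_zero, zero_add, htake] at hacc
            simp [hσ] at hacc
            exact hA hacc
          show (if S.min' hSne = 0 then p else m) = m
          rw [if_neg hne]
        · have hne : (⟨n' + 2 - 1, Nat.sub_lt hn one_pos⟩ : Fin (n' + 2)) ≠ 0 := by
            intro h; have := congrArg Fin.val h; simp at this
          simp only [hσ]; rw [if_neg hne]
      have hmax : p ≤ maxPrice hn σ := by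
        have := Finset.le_sup' σ (Finset.mem_univ (0 : Fin (n' + 2)))
        simpa [maxPrice, hσ] using this
      rw [hprofit, hmul2]; exact hmax
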